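/- Let K_p, u_0, r_t be positive reals and let r : [0, ∞) → (0, ∞) be differentiable with r(0) = r_t and r′(u) ≥ −(r(u)·(K_p + r(u)))/(K_p·u_0) for all u ≥ 0. Then for all u ≥ 0, r(u) ≥ (r_t·K_p) / ((r_t + K_p)·exp(u/u_0) − r_t). -/

import Mathlib

/-- comparison lemma for the Riccati-type lower-bound ODE. -/
theorem stmt_10 (Kp u0 rt : ℝ) (r : ℝ → ℝ)
    (hKp : 0 < Kp) (hu0 : 0 < u0) (hrt : 0 < rt)
    (hpos : ∀ u ≥ (0:ℝ), 0 < r u) (h0 : r 0 = rt)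
    (hdiff : ∀ u ≥ (0:ℝ), DifferentiableAt ℝ r u)
    (hineq : ∀ u ≥ (0:ℝ), deriv r u ≥ -(r u * (Kp + r u)) / (Kp * u0)) :
    ∀ u ≥ (0:ℝ), r u ≥ rt * Kp / ((rt + Kp) * Real.exp (u / u0) - rt) := by
  set g : ℝ → ℝ := fun x => ((r x)⁻¹ + Kp⁻¹) * Real.exp (-(x / u0)) with hg_def
  have hgD : ∀ u ≥ (0:ℝ), HasDerivAt g
      ((-deriv r u / (r u) ^ 2) * Real.exp (-(u / u0))
        + ((r u)⁻¹ + Kp⁻¹) * (Real.exp (-(u / u0)) * (-(1 / u0)))) u := by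
    intro u hu
    have hr := (hdiff u hu).hasDerivAt
    have hv : HasDerivAt (fun x => (r x)⁻¹) (-deriv r u / (r u) ^ 2) u :=
      hr.inv (hpos u hu).ne'
    have hv2 : HasDerivAt (fun x => (r x)⁻¹ + Kp⁻¹) (-deriv r u / (r u) ^ 2) u :=
      hv.add_const _
    have hin : HasDerivAt (fun x : ℝ => -(x / u0)) (-(1 / u0)) u := by
      exact ((hasDerivAt_id u).div_const u0).neg
    have he : HasDerivAt (fun x : ℝ => Real.exp (-(x / u0)))
        (Real.exp (-(u / u0)) * (-(1 / u0))) u := hin.exp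
    exact hv2.mul he
  have hgderiv_nonpos : ∀ u > (0:ℝ), deriv g u ≤ 0 := by
    intro u hu
    have hR := hpos u hu.le
    have hd := hineq u hu.le
    have hd' : -(r u * (Kp + r u)) ≤ deriv r u * (Kp * u0) := by
      rw [ge_iff_le, div_le_iff₀ (by positivity)] at hd
      exact hd
    have hEq : deriv g u = Real.exp (-(u / u0)) *
        ((-(deriv r u * (Kp * u0)) - (r u * Kp + r u ^ 2)) / ((r u) ^ 2 * Kp * u0)) := by
      rw [(hgD u hu.le).deriv]
      field_simp
      ring
    rw [hEq]
    apply mul_nonpos_iff.mpr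
    left
    refine ⟨(Real.exp_nonneg _), ?_⟩
    apply div_nonpos_of_nonpos_of_nonneg
    · nlinarith
    · positivity
  have hcont : ContinuousOn g (Set.Ici (0:ℝ)) := fun x hx =>
    ((hgD x hx).differentiableAt.continuousAt).continuousWithinAt
  have hdiffOn : DifferentiableOn ℝ g (interior (Set.Ici (0:ℝ))) := by
    rw [interior_Ici]
    exact fun x hx => ((hgD x (le_of_lt hx)).differentiableAt).differentiableWithinAt
  have hant : AntitoneOn g (Set.Ici (0:ℝ)) := by
    apply antitoneOn_of_deriv_nonpos (convex_Ici 0) hcont hdiffOn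
    intro x hx
    rw [interior_Ici] at hx
    exact hgderiv_nonpos x hx
  intro u hu
  have hle : g u ≤ g 0 := hant (Set.self_mem_Ici) hu hu
  have hg0 : g 0 = rt⁻¹ + Kp⁻¹ := by simp [hg_def, h0]
  rw [hg0] at hle
  have hR := hpos u hu
  set E := Real.exp (u / u0) with hE_def
  have hE1 : 1 ≤ E := Real.one_le_exp (by positivity)
  have hEpos : 0 < E := lt_of_lt_of_le one_pos hE1
  have hEinv : Real.exp (-(u / u0)) = E⁻¹ := by rw [Real.exp_neg]
  rw [hg_def] at hle
  simp only [hEinv] at hle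
  have hD : 0 < (rt + Kp) * E - rt := by nlinarith
  rw [ge_iff_le, div_le_iff₀ hD]
  have h4 := mul_le_mul_of_nonneg_left hle
    (show (0:ℝ) ≤ r u * rt * Kp * E by positivity)
  have e1 : r u * rt * Kp * E * (((r u)⁻¹ + Kp⁻¹) * E⁻¹) = rt * (Kp + r u) := by
    field_simp
  have e2 : r u * rt * Kp * E * (rt⁻¹ + Kp⁻¹) = r u * (Kp + rt) * E := by
    field_simp
  rw [e1, e2] at h4
  nlinarith [h4]
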